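/- arXiv:1509.05199 — 6 statements merged into one kernel-verified Lean document; each statement's English description precedes it below -/
import Mathlib

section
/- Let q : (0,∞) → ℝ be smooth with q' > 0 strictly decreasing and strictly convex (q'' < 0, q⁽³⁾ > 0). Define f_n(x) = q(x) + (N_n − x)²/(2nσ²), and let x_n* be the unique solution of q''(x_n*) = −1/(nσ²) and N_n* = x_n* + nσ² q'(x_n*). If N_n < N_n*, then f_n'(x) > 0 for all x > 0. -/
open Real Set Filter

/-- Lemma 2.2(a): with f_n(x) = q(x) + (N-x)²/(2s) (s = nσ²), if N < N* then
f_n' > 0 on (0,∞). -/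
theorem stmt3 (q q' q'' q''' : ℝ → ℝ) (s N xstar Nstar : ℝ)
    (hs : 0 < s)
    (hq : ∀ x ∈ Ioi (0:ℝ), HasDerivAt q (q' x) x)
    (hq' : ∀ x ∈ Ioi (0:ℝ), HasDerivAt q' (q'' x) x)
    (hq'' : ∀ x ∈ Ioi (0:ℝ), HasDerivAt q'' (q''' x) x)
    (hq'pos : ∀ x ∈ Ioi (0:ℝ), 0 < q' x)
    (hq''neg : ∀ x ∈ Ioi (0:ℝ), q'' x < 0)
    (hq'''pos : ∀ x ∈ Ioi (0:ℝ), 0 < q''' x)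
    (hxstar : xstar ∈ Ioi (0:ℝ))
    (hxdef : q'' xstar = -(1 / s))
    (hNstar : Nstar = xstar + s * q' xstar)
    (hN : N < Nstar) :
    ∀ x ∈ Ioi (0:ℝ), 0 < deriv (fun y => q y + (N - y) ^ 2 / (2 * s)) x := by
  have hxs0 : (0:ℝ) < xstar := hxstar
  -- q'' is monotone on Ioi 0
  have hmono : StrictMonoOn q'' (Ioi (0:ℝ)) := by
    apply strictMonoOn_of_deriv_pos (convex_Ioi 0)
    · exact fun x hx => ((hq'' x hx).continuousAt).continuousWithinAt
    · intro x hx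
      rw [interior_Ioi] at hx
      rw [(hq'' x hx).deriv]
      exact hq'''pos x hx
  -- g t = s * q' t + t has minimum at xstar on Ioi 0
  set g : ℝ → ℝ := fun t => s * q' t + t with hg
  have hgderiv : ∀ x ∈ Ioi (0:ℝ), HasDerivAt g (s * q'' x + 1) x := by
    intro x hx
    exact ((hq' x hx).const_mul s).add (hasDerivAt_id x)
  have hgmin : ∀ x ∈ Ioi (0:ℝ), g xstar ≤ g x := by
    intro x hx
    rcases le_total x xstar with hle | hle
    · -- antitone on Ioc 0 xstar
      have hanti : AntitoneOn g (Ioc (0:ℝ) xstar) := by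
        apply antitoneOn_of_deriv_nonpos (convex_Ioc 0 xstar)
        · intro t ht
          exact ((hgderiv t ht.1).continuousAt).continuousWithinAt
        · intro t ht
          rw [interior_Ioc] at ht
          exact ((hgderiv t ht.1).differentiableAt).differentiableWithinAt
        · intro t ht
          rw [interior_Ioc] at ht
          rw [(hgderiv t ht.1).deriv]
          have h1 : q'' t < q'' xstar := hmono ht.1 hxstar ht.2
          have h2 : s * q'' xstar = -1 := by rw [hxdef]; field_simp
          nlinarith
      exact hanti ⟨hx, hle⟩ ⟨hxs0, le_refl _⟩ hle
    · -- monotone on Ici xstar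
      have hmonog : MonotoneOn g (Ici xstar) := by
        apply monotoneOn_of_deriv_nonneg (convex_Ici xstar)
        · intro t ht
          have ht0 : (0:ℝ) < t := lt_of_lt_of_le hxs0 ht
          exact ((hgderiv t ht0).continuousAt).continuousWithinAt
        · intro t ht
          rw [interior_Ici] at ht
          have ht0 : (0:ℝ) < t := lt_trans hxs0 ht
          exact ((hgderiv t ht0).differentiableAt).differentiableWithinAt
        · intro t ht
          rw [interior_Ici] at ht
          have ht0 : (0:ℝ) < t := lt_trans hxs0 ht
          rw [(hgderiv t ht0).deriv]
          have h1 : q'' xstar < q'' t := hmono hxstar ht0 ht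
          have h2 : s * q'' xstar = -1 := by rw [hxdef]; field_simp
          nlinarith
      exact hmonog self_mem_Ici hle hle
  intro x hx
  have hd : HasDerivAt (fun y => q y + (N - y) ^ 2 / (2 * s))
      (q' x + (2 * (N - x) * (0 - 1)) / (2 * s)) x := by
    have h1 : HasDerivAt (fun y : ℝ => (N - y) ^ 2) (2 * (N - x) * (0 - 1)) x := by
      have h0 : HasDerivAt (fun y : ℝ => N - y) (0 - 1) x :=
        (hasDerivAt_const x N).sub (hasDerivAt_id x)
      simpa using h0.fun_pow 2
    exact (hq x hx).add (h1.div_const (2 * s))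
  rw [hd.deriv]
  have hkey : N < g x := by
    have h1 := hgmin x hx
    have h2 : Nstar ≤ g x := by
      simp only [hg, hNstar] at h1 ⊢; linarith
    linarith
  have heq : q' x + (2 * (N - x) * (0 - 1)) / (2 * s) = (s * q' x + x - N) / s := by
    field_simp; ring
  rw [heq]
  apply div_pos _ hs
  simp only [hg] at hkey
  linarith
end

section
/- Under the setting of the minimization of f_n(x) = q(x) + (N_n − x)²/(2nσ²), if N_n = N_n* (where N_n* = x_n* + nσ² q'(x_n*) and q''(x_n*) = −1/(nσ²)), then f_n'(x) ≥ 0 for all x > 0, with equality if and only if x = x_n*. -/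
open Real Set Filter

/-- Lemma 2.2(b): if N = N*, then f_n'(x) ≥ 0 for all x > 0, with equality iff
x = x_n*. -/
theorem stmt4 (q q' q'' q''' : ℝ → ℝ) (s N xstar Nstar : ℝ)
    (hs : 0 < s)
    (hq : ∀ x ∈ Ioi (0:ℝ), HasDerivAt q (q' x) x)
    (hq' : ∀ x ∈ Ioi (0:ℝ), HasDerivAt q' (q'' x) x)
    (hq'' : ∀ x ∈ Ioi (0:ℝ), HasDerivAt q'' (q''' x) x)
    (hq'pos : ∀ x ∈ Ioi (0:ℝ), 0 < q' x)
    (hq''neg : ∀ x ∈ Ioi (0:ℝ), q'' x < 0)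
    (hq'''pos : ∀ x ∈ Ioi (0:ℝ), 0 < q''' x)
    (hxstar : xstar ∈ Ioi (0:ℝ))
    (hxdef : q'' xstar = -(1 / s))
    (hNstar : Nstar = xstar + s * q' xstar)
    (hN : N = Nstar) :
    ∀ x ∈ Ioi (0:ℝ),
      0 ≤ deriv (fun y => q y + (N - y) ^ 2 / (2 * s)) x ∧
      (deriv (fun y => q y + (N - y) ^ 2 / (2 * s)) x = 0 ↔ x = xstar) := by
  have hs' : s ≠ 0 := ne_of_gt hs
  set g : ℝ → ℝ := fun x => q' x + (x - N) / s with hg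
  -- derivative of f equals g
  have hderiv : ∀ x ∈ Ioi (0:ℝ),
      deriv (fun y => q y + (N - y) ^ 2 / (2 * s)) x = g x := by
    intro x hx
    have h2 : HasDerivAt (fun y : ℝ => (N - y) ^ 2 / (2 * s)) ((x - N) / s) x := by
      have h3 : HasDerivAt (fun y : ℝ => (N - y) ^ 2)
          ((2 : ℕ) * (N - x) ^ (2 - 1) * (-1)) x :=
        ((hasDerivAt_id x).const_sub N).pow 2
      have := h3.div_const (2 * s)
      refine this.congr_deriv ?_
      rw [div_eq_div_iff (by positivity) hs']
      push_cast
      ring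
    exact ((hq x hx).add h2).deriv
  -- g has derivative q'' x + 1/s
  have hgd : ∀ x ∈ Ioi (0:ℝ), HasDerivAt g (q'' x + 1 / s) x := by
    intro x hx
    have h4 : HasDerivAt (fun y : ℝ => (y - N) / s) (1 / s) x := by
      have := ((hasDerivAt_id x).sub_const N).div_const s
      simpa using this
    exact (hq' x hx).add h4
  -- q'' is strictly monotone on Ioi 0
  have hmono : StrictMonoOn q'' (Ioi 0) := by
    apply strictMonoOn_of_deriv_pos (convex_Ioi 0)
      (fun x hx => (hq'' x hx).continuousAt.continuousWithinAt)
    intro x hx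
    rw [interior_Ioi] at hx
    rw [(hq'' x hx).deriv]
    exact hq'''pos x hx
  have hcontg : ContinuousOn g (Ioi 0) :=
    fun x hx => (hgd x hx).continuousAt.continuousWithinAt
  have hxpos : (0:ℝ) < xstar := hxstar
  -- g strictly antitone on Ioc 0 xstar
  have hanti : StrictAntiOn g (Ioc 0 xstar) := by
    apply strictAntiOn_of_deriv_neg (convex_Ioc 0 xstar)
      (hcontg.mono Ioc_subset_Ioi_self)
    intro x hx
    rw [interior_Ioc] at hx
    rw [(hgd x hx.1).deriv]
    have h5 : q'' x < q'' xstar := hmono hx.1 hxstar hx.2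
    rw [hxdef] at h5
    linarith
  -- g strictly monotone on Ici xstar
  have hmon2 : StrictMonoOn g (Ici xstar) := by
    apply strictMonoOn_of_deriv_pos (convex_Ici xstar)
      (hcontg.mono (fun y hy => lt_of_lt_of_le hxpos hy))
    intro x hx
    rw [interior_Ici] at hx
    have hx0 : x ∈ Ioi (0:ℝ) := lt_trans hxpos hx
    rw [(hgd x hx0).deriv]
    have h5 : q'' xstar < q'' x := hmono hxstar hx0 hx
    rw [hxdef] at h5
    linarith
  have hgstar : g xstar = 0 := by
    simp only [hg, hN, hNstar]
    field_simp
    ring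
  intro x hx
  have key : 0 ≤ g x ∧ (g x = 0 ↔ x = xstar) := by
    rcases lt_trichotomy x xstar with h | h | h
    · have : g xstar < g x :=
        hanti ⟨hx, le_of_lt h⟩ ⟨hxpos, le_refl _⟩ h
      rw [hgstar] at this
      exact ⟨le_of_lt this, by constructor <;> intro hh <;> [linarith; exact absurd hh (ne_of_lt h)]⟩
    · subst h
      exact ⟨le_of_eq hgstar.symm, by simp [hgstar]⟩
    · have : g xstar < g x :=
        hmon2 (le_refl xstar) (le_of_lt h) h
      rw [hgstar] at this
      exact ⟨le_of_lt this, by constructor <;> intro hh <;> [linarith; exact absurd hh (ne_of_gt h)]⟩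
  rw [hderiv x hx]
  exact key
end

section
/- Let q : (0,∞) → ℝ be smooth with q' > 0, q'' < 0 strictly increasing (q⁽³⁾ > 0). Set f_n(x) = q(x) + (N_n − x)²/(2nσ²), with x_n* defined by q''(x_n*) = −1/(nσ²) and N_n* = x_n* + nσ² q'(x_n*). If N_n > N_n* and lim sup N_n/(nσ²) < lim_{x→0⁺} q'(x), then f_n has exactly two critical points x_n' < x_n* < x_n < N_n, where x_n' is the maximizer of f_n on (0, x_n*) and x_n is the minimizer of f_n on (x_n*, ∞). -/
open Real Set Filter Topology

/-- Lemma 2.2(c): if N > N* and N/(nσ²) stays below lim_{x→0⁺} q'(x), then f_n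
has exactly two critical points x' < x* < x < N, with x' the maximizer on
(0, x*) and x the minimizer on (x*, ∞). -/
theorem stmt5 (q q' q'' q''' : ℝ → ℝ) (s N xstar Nstar L : ℝ) (f : ℝ → ℝ)
    (hs : 0 < s)
    (hq : ∀ x ∈ Ioi (0:ℝ), HasDerivAt q (q' x) x)
    (hq' : ∀ x ∈ Ioi (0:ℝ), HasDerivAt q' (q'' x) x)
    (hq'' : ∀ x ∈ Ioi (0:ℝ), HasDerivAt q'' (q''' x) x)
    (hq'pos : ∀ x ∈ Ioi (0:ℝ), 0 < q' x)
    (hq''neg : ∀ x ∈ Ioi (0:ℝ), q'' x < 0)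
    (hq'''pos : ∀ x ∈ Ioi (0:ℝ), 0 < q''' x)
    (hxstar : xstar ∈ Ioi (0:ℝ))
    (hxdef : q'' xstar = -(1 / s))
    (hNstar : Nstar = xstar + s * q' xstar)
    (hN : Nstar < N)
    (hlim : Tendsto q' (nhdsWithin 0 (Ioi 0)) (𝓝 L))
    (hNL : N / s < L)
    (hf : f = fun y => q y + (N - y) ^ 2 / (2 * s)) :
    ∃ x' x : ℝ, x' ∈ Ioo (0:ℝ) xstar ∧ x ∈ Ioo xstar N ∧
      deriv f x' = 0 ∧ deriv f x = 0 ∧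
      (∀ y ∈ Ioi (0:ℝ), deriv f y = 0 → y = x' ∨ y = x) ∧
      IsMaxOn f (Ioo (0:ℝ) xstar) x' ∧
      IsMinOn f (Ioi xstar) x := by
  have hxs : (0:ℝ) < xstar := hxstar
  set g : ℝ → ℝ := fun y => q' y + (y - N) / s with hg
  -- derivative of f
  have hfg : ∀ y ∈ Ioi (0:ℝ), HasDerivAt f (g y) y := by
    intro y hy
    have h1 : HasDerivAt (fun y : ℝ => (N - y) ^ 2 / (2 * s)) ((y - N) / s) y := by
      have h0 : HasDerivAt (fun y : ℝ => (N - y) ^ 2) (2 * (N - y) * (-1)) y := by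
        simpa using ((hasDerivAt_id y).const_sub N).fun_pow 2
      have := h0.div_const (2 * s)
      refine this.congr_deriv ?_
      field_simp
      ring
    have := (hq y hy).fun_add h1
    rw [hf]
    simpa [hg] using this
  have hderiv : ∀ y ∈ Ioi (0:ℝ), deriv f y = g y := fun y hy => (hfg y hy).deriv
  -- derivative of g
  have hgd : ∀ y ∈ Ioi (0:ℝ), HasDerivAt g (q'' y + 1 / s) y := by
    intro y hy
    have h1 : HasDerivAt (fun y : ℝ => (y - N) / s) (1 / s) y := by
      simpa using ((hasDerivAt_id y).sub_const N).div_const s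
    exact (hq' y hy).add h1
  -- q'' strictly monotone
  have hq''mono : StrictMonoOn q'' (Ioi 0) := by
    apply strictMonoOn_of_deriv_pos (convex_Ioi 0)
    · exact fun y hy => (hq'' y hy).continuousAt.continuousWithinAt
    · intro y hy
      rw [interior_Ioi] at hy
      rw [(hq'' y hy).deriv]
      exact hq'''pos y hy
  have hg'neg : ∀ y ∈ Ioo (0:ℝ) xstar, q'' y + 1 / s < 0 := by
    intro y hy
    have := hq''mono hy.1 hxstar hy.2
    rw [hxdef] at this; linarith
  have hg'pos : ∀ y ∈ Ioi xstar, 0 < q'' y + 1 / s := by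
    intro y hy
    have := hq''mono hxstar (lt_trans hxs hy) hy
    rw [hxdef] at this; linarith
  -- g monotonicity
  have hganti : StrictAntiOn g (Ioc 0 xstar) := by
    apply strictAntiOn_of_deriv_neg (convex_Ioc 0 xstar)
    · exact fun y hy => (hgd y hy.1).continuousAt.continuousWithinAt
    · intro y hy
      rw [interior_Ioc] at hy
      rw [(hgd y hy.1).deriv]
      exact hg'neg y hy
  have hgmono : StrictMonoOn g (Ici xstar) := by
    apply strictMonoOn_of_deriv_pos (convex_Ici xstar)
    · exact fun y hy => (hgd y (lt_of_lt_of_le hxs hy)).continuousAt.continuousWithinAt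
    · intro y hy
      rw [interior_Ici] at hy
      rw [(hgd y (lt_trans hxs hy)).deriv]
      exact hg'pos y hy
  -- key values
  have hNs : xstar + s * q' xstar < N := hNstar ▸ hN
  have hq'xs : 0 < q' xstar := hq'pos xstar hxstar
  have hxN : xstar < N := by nlinarith
  have hN0 : (0:ℝ) < N := lt_trans hxs hxN
  have hgxstar : g xstar < 0 := by
    have h2 : (xstar - N) / s < -q' xstar := by
      rw [div_lt_iff₀ hs]; nlinarith
    simp only [hg]; linarith
  have hgN : 0 < g N := by
    have := hq'pos N hN0
    simp only [hg]; simpa using this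
  -- existence of x' : g positive near 0
  have htend : Tendsto g (nhdsWithin 0 (Ioi 0)) (𝓝 (L + (0 - N) / s)) := by
    apply hlim.add
    exact Tendsto.mono_left (((continuous_id.sub continuous_const).div_const s).tendsto 0)
      nhdsWithin_le_nhds
  have hLpos : 0 < L + (0 - N) / s := by
    have : (0 - N) / s = -(N / s) := by ring
    rw [this]; linarith
  have hev : ∀ᶠ y in nhdsWithin 0 (Ioi 0), 0 < g y := htend.eventually (eventually_gt_nhds hLpos)
  have hmem : Ioo (0:ℝ) xstar ∈ nhdsWithin (0:ℝ) (Ioi 0) :=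
    Ioo_mem_nhdsGT_of_mem ⟨le_refl 0, hxs⟩
  obtain ⟨a, hga, ha⟩ := (hev.and (eventually_of_mem hmem (fun y hy => hy))).exists
  -- IVT for x'
  have hcont1 : ContinuousOn g (Icc a xstar) := fun y hy =>
    (hgd y (lt_of_lt_of_le ha.1 hy.1)).continuousAt.continuousWithinAt
  have hx'ex : (0:ℝ) ∈ g '' Ioo a xstar := by
    apply intermediate_value_Ioo' (le_of_lt ha.2) hcont1
    exact ⟨hgxstar, hga⟩
  obtain ⟨x', hx'mem, hgx'⟩ := hx'ex
  have hx'Ioo : x' ∈ Ioo (0:ℝ) xstar := ⟨lt_trans ha.1 hx'mem.1, hx'mem.2⟩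
  -- IVT for x
  have hcont2 : ContinuousOn g (Icc xstar N) := fun y hy =>
    (hgd y (lt_of_lt_of_le hxs hy.1)).continuousAt.continuousWithinAt
  have hxex : (0:ℝ) ∈ g '' Ioo xstar N := by
    apply intermediate_value_Ioo (le_of_lt hxN) hcont2
    exact ⟨hgxstar, hgN⟩
  obtain ⟨x, hxmem, hgx⟩ := hxex
  -- uniqueness
  have huniq : ∀ y ∈ Ioi (0:ℝ), g y = 0 → y = x' ∨ y = x := by
    intro y hy hgy
    rcases lt_trichotomy y xstar with h | h | h
    · left
      exact hganti.injOn ⟨hy, le_of_lt h⟩ ⟨hx'Ioo.1, le_of_lt hx'Ioo.2⟩ (hgy.trans hgx'.symm)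
    · exact absurd (h ▸ hgy) (ne_of_lt hgxstar)
    · right
      exact hgmono.injOn (le_of_lt h) (le_of_lt hxmem.1) (hgy.trans hgx.symm)
  -- sign of g on subintervals
  have hgpos1 : ∀ y ∈ Ioo (0:ℝ) x', 0 < g y := by
    intro y hy
    have := hganti ⟨hy.1, le_of_lt (lt_trans hy.2 hx'Ioo.2)⟩
      ⟨hx'Ioo.1, le_of_lt hx'Ioo.2⟩ hy.2
    rw [hgx'] at this; exact this
  have hgneg1 : ∀ y ∈ Ioo x' xstar, g y < 0 := by
    intro y hy
    have := hganti ⟨hx'Ioo.1, le_of_lt hx'Ioo.2⟩ ⟨lt_trans hx'Ioo.1 hy.1, le_of_lt hy.2⟩ hy.1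
    rw [hgx'] at this; exact this
  have hgneg2 : ∀ y ∈ Ioo xstar x, g y < 0 := by
    intro y hy
    have := hgmono (le_of_lt hy.1) (le_of_lt hxmem.1) hy.2
    rw [hgx] at this; exact this
  have hgpos2 : ∀ y ∈ Ioi x, 0 < g y := by
    intro y hy
    have := hgmono (le_of_lt hxmem.1) (le_of_lt (lt_trans hxmem.1 hy)) hy
    rw [hgx] at this; exact this
  -- monotonicity of f on pieces
  have hcf : ∀ D ⊆ Ioi (0:ℝ), ContinuousOn f D := fun D hD y hy =>
    (hfg y (hD hy)).continuousAt.continuousWithinAt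
  have hf1 : StrictMonoOn f (Ioc 0 x') := by
    apply strictMonoOn_of_deriv_pos (convex_Ioc 0 x')
    · exact hcf _ (fun y hy => hy.1)
    · intro y hy
      rw [interior_Ioc] at hy
      rw [hderiv y hy.1]
      exact hgpos1 y hy
  have hf2 : StrictAntiOn f (Icc x' xstar) := by
    apply strictAntiOn_of_deriv_neg (convex_Icc x' xstar)
    · exact hcf _ (fun y hy => lt_of_lt_of_le hx'Ioo.1 hy.1)
    · intro y hy
      rw [interior_Icc] at hy
      rw [hderiv y (lt_trans hx'Ioo.1 hy.1)]
      exact hgneg1 y hy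
  have hf3 : StrictAntiOn f (Icc xstar x) := by
    apply strictAntiOn_of_deriv_neg (convex_Icc xstar x)
    · exact hcf _ (fun y hy => lt_of_lt_of_le hxs hy.1)
    · intro y hy
      rw [interior_Icc] at hy
      rw [hderiv y (lt_trans hxs hy.1)]
      exact hgneg2 y hy
  have hf4 : StrictMonoOn f (Ici x) := by
    apply strictMonoOn_of_deriv_pos (convex_Ici x)
    · exact hcf _ (fun y hy => lt_of_lt_of_le (lt_trans hxs hxmem.1) hy)
    · intro y hy
      rw [interior_Ici] at hy
      rw [hderiv y (lt_trans (lt_trans hxs hxmem.1) hy)]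
      exact hgpos2 y hy
  refine ⟨x', x, hx'Ioo, hxmem, ?_, ?_, ?_, ?_, ?_⟩
  · rw [hderiv x' hx'Ioo.1]; exact hgx'
  · rw [hderiv x (lt_trans hxs hxmem.1)]; exact hgx
  · intro y hy hdy
    exact huniq y hy ((hderiv y hy) ▸ hdy)
  · intro y hy
    simp only [Set.mem_setOf_eq]
    rcases lt_trichotomy y x' with h | h | h
    · exact le_of_lt (hf1 ⟨hy.1, le_of_lt h⟩ ⟨hx'Ioo.1, le_refl x'⟩ h)
    · exact le_of_eq (by rw [h])
    · exact le_of_lt (hf2 ⟨le_refl x', le_of_lt hx'Ioo.2⟩ ⟨le_of_lt h, le_of_lt hy.2⟩ h)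
  · intro y hy
    simp only [Set.mem_setOf_eq]
    rcases lt_trichotomy y x with h | h | h
    · exact le_of_lt (hf3 ⟨le_of_lt hy, le_of_lt h⟩ ⟨le_of_lt hxmem.1, le_refl x⟩ h)
    · exact le_of_eq (by rw [h])
    · exact le_of_lt (hf4 (le_refl x) (le_of_lt h) h)
end

section
/- Let q : (0,∞) → ℝ be smooth with q' > 0 strictly decreasing and strictly convex. Suppose N_n > N_n* and let x_n ∈ (x_n*, ∞) be the critical point of f_n(x) = q(x) + (N_n−x)²/(2nσ²) satisfying q'(x_n) = (N_n − x_n)/(nσ²). Then N_n − N_n* ≤ x_n ≤ N_n, and nσ² f_n''(x_n) = 1 − nσ²|q''(x_n)| = 1 + O(N_n*/N_n). -/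
open Real Set Filter Asymptotics

lemma stmt6_mvt (g g' : ℝ → ℝ) (hg : ∀ x ∈ Ioi (0:ℝ), HasDerivAt g (g' x) x)
    {a b : ℝ} (ha : 0 < a) (hab : a < b) :
    ∃ c ∈ Ioo a b, g' c = (g b - g a) / (b - a) := by
  have hcont : ContinuousOn g (Icc a b) := fun x hx =>
    ((hg x (lt_of_lt_of_le ha hx.1)).continuousAt).continuousWithinAt
  exact exists_hasDerivAt_eq_slope g g' hab hcont
    (fun x hx => hg x (ha.trans hx.1))

/-- Lemma 2.4: for N_n > N_n*, the critical point x_n ∈ (x_n*, N_n) satisfies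
N_n − N_n* ≤ x_n ≤ N_n, and nσ² f_n''(x_n) = 1 − nσ²|q''(x_n)| = 1 + O(N_n*/N_n). -/
theorem stmt6 (q q' q'' q''' : ℝ → ℝ) (σ2 : ℝ) (hσ : 0 < σ2)
    (hq : ∀ x ∈ Ioi (0:ℝ), HasDerivAt q (q' x) x)
    (hq' : ∀ x ∈ Ioi (0:ℝ), HasDerivAt q' (q'' x) x)
    (hq'' : ∀ x ∈ Ioi (0:ℝ), HasDerivAt q'' (q''' x) x)
    (hq'pos : ∀ x ∈ Ioi (0:ℝ), 0 < q' x)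
    (hq''neg : ∀ x ∈ Ioi (0:ℝ), q'' x < 0)
    (hq'''pos : ∀ x ∈ Ioi (0:ℝ), 0 < q''' x)
    (N Nstar xstar xn : ℕ → ℝ)
    (hxstar : ∀ n : ℕ, 1 ≤ n → xstar n ∈ Ioi (0:ℝ) ∧
      q'' (xstar n) = -(1 / ((n : ℝ) * σ2)))
    (hNstar : ∀ n : ℕ, 1 ≤ n →
      Nstar n = xstar n + (n : ℝ) * σ2 * q' (xstar n))
    (hN : ∀ n : ℕ, 1 ≤ n → Nstar n < N n)
    (hxn : ∀ n : ℕ, 1 ≤ n → xstar n < xn n ∧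
      q' (xn n) = (N n - xn n) / ((n : ℝ) * σ2)) :
    (∀ n : ℕ, 1 ≤ n → N n - Nstar n ≤ xn n ∧ xn n ≤ N n) ∧
    (∀ n : ℕ, 1 ≤ n →
      (n : ℝ) * σ2 * (q'' (xn n) + 1 / ((n : ℝ) * σ2)) =
        1 - (n : ℝ) * σ2 * |q'' (xn n)|) ∧
    (fun n : ℕ => (n : ℝ) * σ2 * (q'' (xn n) + 1 / ((n : ℝ) * σ2)) - 1)
      =O[atTop] fun n : ℕ => Nstar n / N n := by
  -- strict antitonicity of q' on Ioi 0
  have hanti : ∀ a b : ℝ, 0 < a → a < b → q' b < q' a := by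
    intro a b ha hab
    obtain ⟨c, hc, hceq⟩ := stmt6_mvt q' q'' hq' ha hab
    have hcpos : 0 < c := ha.trans hc.1
    have h0 : (q' b - q' a) / (b - a) < 0 := hceq ▸ hq''neg c hcpos
    rw [div_lt_iff₀ (sub_pos.mpr hab)] at h0
    linarith
  -- convexity inequality: q' b - q' a < q'' b * (b - a)
  have hconv : ∀ a b : ℝ, 0 < a → a < b → q' b - q' a < q'' b * (b - a) := by
    intro a b ha hab
    obtain ⟨c, hc, hceq⟩ := stmt6_mvt q' q'' hq' ha hab
    have hcpos : 0 < c := ha.trans hc.1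
    -- q'' c < q'' b since q''' > 0
    obtain ⟨d, hd, hdeq⟩ := stmt6_mvt q'' q''' hq'' hcpos hc.2
    have hdpos : 0 < d := hcpos.trans hd.1
    have h1 : 0 < (q'' b - q'' c) / (b - c) := hdeq ▸ hq'''pos d hdpos
    have h2 : q'' c < q'' b := by
      rw [lt_div_iff₀ (sub_pos.mpr hc.2)] at h1; linarith
    have h3 : q' b - q' a = q'' c * (b - a) := by
      rw [hceq, div_mul_cancel₀ _ (sub_ne_zero.mpr hab.ne')]
    nlinarith [sub_pos.mpr hab]
  -- main bundle
  have hmain : ∀ n : ℕ, 1 ≤ n →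
      (N n - Nstar n ≤ xn n ∧ xn n ≤ N n) ∧
      ((n:ℝ) * σ2 * (-q'' (xn n)) ≤ Nstar n / N n ∧ 0 < N n ∧ 0 < Nstar n ∧
        q'' (xn n) < 0) := by
    intro n hn
    have hn1 : (1:ℝ) ≤ (n:ℝ) := by exact_mod_cast hn
    have hs : (0:ℝ) < (n:ℝ) * σ2 := by nlinarith
    obtain ⟨hxs, hq''xs⟩ := hxstar n hn
    obtain ⟨hlt, hcrit⟩ := hxn n hn
    have hNs := hNstar n hn
    have hNN := hN n hn
    have hxspos : (0:ℝ) < xstar n := hxs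
    have hxnpos : (0:ℝ) < xn n := hxspos.trans hlt
    have hq'xs : 0 < q' (xstar n) := hq'pos _ hxspos
    have hNspos : 0 < Nstar n := by nlinarith
    have hq''xn : q'' (xn n) < 0 := hq''neg _ hxnpos
    -- xn ≤ N
    have hq'xn : 0 < q' (xn n) := hq'pos _ hxnpos
    have hxnN : xn n ≤ N n := by
      rw [hcrit] at hq'xn
      rcases div_pos_iff.mp hq'xn with ⟨h, _⟩ | ⟨_, h⟩
      · linarith
      · linarith
    have hNpos : 0 < N n := hNspos.trans hNN
    -- q'(xn) < q'(xstar)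
    have hq'dec : q' (xn n) < q' (xstar n) := hanti _ _ hxspos hlt
    -- N - Nstar ≤ xn
    have h1 : N n - xn n < Nstar n - xstar n := by
      rw [hcrit] at hq'dec
      have : N n - xn n < (n:ℝ) * σ2 * q' (xstar n) := by
        rw [div_lt_iff₀ hs] at hq'dec; linarith [mul_comm (q' (xstar n)) ((n:ℝ) * σ2)]
      linarith
    have hpart1 : N n - Nstar n ≤ xn n := by linarith
    -- key bound: n σ2 * (-q'' xn) ≤ Nstar/N
    have hc := hconv (xstar n) (xn n) hxspos hlt
    -- multiply by s : s q'(xn) - s q'(xstar) < s q''(xn) (xn - xstar)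
    have hsc : (n:ℝ) * σ2 * (q' (xn n)) - (n:ℝ) * σ2 * q' (xstar n) <
        (n:ℝ) * σ2 * q'' (xn n) * (xn n - xstar n) := by nlinarith
    have hq'xnval : (n:ℝ) * σ2 * q' (xn n) = N n - xn n := by
      rw [hcrit]; field_simp
    -- so: (N - xn) - (Nstar - xstar) < s q''(xn) (xn - xstar)
    have h2 : ((n:ℝ) * σ2 * (-q'' (xn n))) * (xn n - xstar n) <
        (xn n - xstar n) - (N n - Nstar n) := by nlinarith
    have hdx : 0 < xn n - xstar n := sub_pos.mpr hlt
    have hD : (N n - Nstar n) / (xn n - xstar n) * (xn n - xstar n) = N n - Nstar n :=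
      div_mul_cancel₀ _ hdx.ne'
    have h3 : (n:ℝ) * σ2 * (-q'' (xn n)) < 1 - (N n - Nstar n) / (xn n - xstar n) := by
      apply lt_of_mul_lt_mul_right _ hdx.le
      nlinarith [hD, h2]
    have h4 : (N n - Nstar n) / N n ≤ (N n - Nstar n) / (xn n - xstar n) := by
      apply div_le_div_of_nonneg_left (by linarith) hdx (by linarith)
    have h5 : (n:ℝ) * σ2 * (-q'' (xn n)) ≤ Nstar n / N n := by
      have : 1 - (N n - Nstar n) / N n = Nstar n / N n := by
        field_simp
        ring
      nlinarith [h3, h4]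
    exact ⟨⟨hpart1, hxnN⟩, h5, hNpos, hNspos, hq''xn⟩
  refine ⟨fun n hn => (hmain n hn).1, ?_, ?_⟩
  · intro n hn
    have hn1 : (1:ℝ) ≤ (n:ℝ) := by exact_mod_cast hn
    have hs : (0:ℝ) < (n:ℝ) * σ2 := by nlinarith
    have habs : |q'' (xn n)| = -q'' (xn n) := abs_of_neg (hmain n hn).2.2.2.2
    rw [habs, mul_add, mul_one_div, div_self hs.ne']
    ring
  · rw [isBigO_iff]
    refine ⟨1, ?_⟩
    filter_upwards [eventually_ge_atTop 1] with n hn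
    have hn1 : (1:ℝ) ≤ (n:ℝ) := by exact_mod_cast hn
    have hs : (0:ℝ) < (n:ℝ) * σ2 := by nlinarith
    obtain ⟨_, hbound, hNpos, hNspos, hq''xn⟩ := hmain n hn
    have hf : (n:ℝ) * σ2 * (q'' (xn n) + 1 / ((n:ℝ) * σ2)) - 1
        = (n:ℝ) * σ2 * q'' (xn n) := by
      rw [mul_add, mul_one_div, div_self hs.ne']; ring
    rw [hf]
    have h1 : |(n:ℝ) * σ2 * q'' (xn n)| = (n:ℝ) * σ2 * (-q'' (xn n)) := by
      rw [abs_of_neg (mul_neg_of_pos_of_neg hs hq''xn)]; ring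
    have h2 : |Nstar n / N n| = Nstar n / N n :=
      abs_of_pos (div_pos hNspos hNpos)
    simp only [Real.norm_eq_abs, one_mul]
    rw [h1, h2]; linarith
end

section
/- Let q satisfy Assumption 2.1 and let ψ(t) = t ξ(t) − q(ξ(t)) with q'(ξ(t)) = t. Then: (a) lim_{t→0⁺} t ψ'(t)/log t = ∞ (in magnitude, i.e., t ξ(t)/|log t| → ∞); (b) there is c > 0 with −ψ''(t) ≥ c ψ'(t)/t for small t > 0; (c) 0 ≤ ψ⁽³⁾(t) ≤ C |ψ''(t)|/t for some C > 0 and small t > 0. -/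
open Real Set Filter Topology

/-- Lemma 4.3: under Assumption 2.1, with ψ' = ξ, ψ'' = ξ', ψ''' = ξ'':
(a) t ψ'(t)/|log t| → ∞ as t → 0⁺; (b) −ψ''(t) ≥ c ψ'(t)/t for small t;
(c) 0 ≤ ψ'''(t) ≤ C |ψ''(t)|/t for small t. -/
theorem stmt11 (a α c₁ c₂ c₃ c₄ t0 : ℝ)
    (q q' q'' q''' : ℝ → ℝ) (ξ ξ' ξ'' : ℝ → ℝ)
    (ha : 0 < a) (hα : α ∈ Ioo (0:ℝ) 1) (ht0 : 0 < t0)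
    (hc₁ : 0 < c₁) (hc₂ : 0 < c₂) (hc₃ : 0 < c₃) (hc₄ : 0 < c₄)
    (hq : ∀ x ∈ Ioi a, HasDerivAt q (q' x) x)
    (hq' : ∀ x ∈ Ioi a, HasDerivAt q' (q'' x) x)
    (hq'' : ∀ x ∈ Ioi a, HasDerivAt q'' (q''' x) x)
    (hq'pos : ∀ x ∈ Ioi a, 0 < q' x)
    (hq''neg : ∀ x ∈ Ioi a, q'' x < 0)
    (hq'''pos : ∀ x ∈ Ioi a, 0 < q''' x)
    (hgrow : Tendsto (fun x => x * q' x / Real.log x) atTop atTop)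
    (hb1 : ∀ x ∈ Ioi a, c₁ * q' x / x ≤ -q'' x ∧ -q'' x ≤ c₂ * q' x / x)
    (hb2 : ∀ x ∈ Ioi a, c₃ * (-q'' x) / x ≤ q''' x ∧ q''' x ≤ c₄ * (-q'' x) / x)
    (hαq : ∀ x ∈ Ioi a, q' x ≤ α * q x / x)
    (hξ : ∀ t ∈ Ioo (0:ℝ) t0, ξ t ∈ Ioi a ∧ q' (ξ t) = t)
    (hξd : ∀ t ∈ Ioo (0:ℝ) t0, HasDerivAt ξ (ξ' t) t)
    (hξdd : ∀ t ∈ Ioo (0:ℝ) t0, HasDerivAt ξ' (ξ'' t) t) :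
    Tendsto (fun t => t * ξ t / |Real.log t|) (𝓝[>] (0:ℝ)) atTop ∧
    (∃ c > (0:ℝ), ∀ᶠ t in 𝓝[>] (0:ℝ), c * ξ t / t ≤ -ξ' t) ∧
    (∃ Cc > (0:ℝ), ∀ᶠ t in 𝓝[>] (0:ℝ), 0 ≤ ξ'' t ∧ ξ'' t ≤ Cc * (-ξ' t) / t) := by
  have hIoo_open : IsOpen (Ioo (0:ℝ) t0) := isOpen_Ioo
  -- ξ' t = (q'' (ξ t))⁻¹ on Ioo 0 t0
  have key1 : ∀ t ∈ Ioo (0:ℝ) t0, ξ' t = (q'' (ξ t))⁻¹ := by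
    intro t ht
    have hcomp : HasDerivAt (fun s => q' (ξ s)) (q'' (ξ t) * ξ' t) t :=
      (hq' _ (hξ t ht).1).comp t (hξd t ht)
    have heq : (fun s : ℝ => s) =ᶠ[𝓝 t] fun s => q' (ξ s) := by
      filter_upwards [hIoo_open.mem_nhds ht] with s hs using ((hξ s hs).2).symm
    have hid : HasDerivAt (fun s : ℝ => s) (q'' (ξ t) * ξ' t) t :=
      hcomp.congr_of_eventuallyEq heq
    have h1 : q'' (ξ t) * ξ' t = 1 := hid.unique (hasDerivAt_id t)
    exact eq_inv_of_mul_eq_one_left (by linarith [mul_comm (q'' (ξ t)) (ξ' t)])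
  have hξ'neg : ∀ t ∈ Ioo (0:ℝ) t0, ξ' t < 0 := by
    intro t ht
    rw [key1 t ht]
    exact inv_lt_zero.mpr (hq''neg _ (hξ t ht).1)
  -- ξ'' formula
  have key2 : ∀ t ∈ Ioo (0:ℝ) t0,
      ξ'' t = -(q''' (ξ t) * ξ' t) / (q'' (ξ t)) ^ 2 := by
    intro t ht
    have hne : q'' (ξ t) ≠ 0 := ne_of_lt (hq''neg _ (hξ t ht).1)
    have hcomp : HasDerivAt (fun s => q'' (ξ s)) (q''' (ξ t) * ξ' t) t :=
      (hq'' _ (hξ t ht).1).comp t (hξd t ht)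
    have hinv : HasDerivAt (fun s => (q'' (ξ s))⁻¹)
        (-(q''' (ξ t) * ξ' t) / (q'' (ξ t)) ^ 2) t := hcomp.inv hne
    have heq : ξ' =ᶠ[𝓝 t] fun s => (q'' (ξ s))⁻¹ := by
      filter_upwards [hIoo_open.mem_nhds ht] with s hs using key1 s hs
    have := hinv.congr_of_eventuallyEq heq
    exact (hξdd t ht).unique this
  -- ξ → ∞ as t → 0⁺
  have hq'anti : AntitoneOn q' (Ioi a) := by
    apply antitoneOn_of_deriv_nonpos (convex_Ioi a)
    · exact fun x hx => (hq' x hx).continuousAt.continuousWithinAt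
    · intro x hx
      rw [interior_Ioi] at hx
      exact (hq' x hx).differentiableAt.differentiableWithinAt
    · intro x hx
      rw [interior_Ioi] at hx
      rw [(hq' x hx).deriv]
      exact (hq''neg x hx).le
  have hξtop : Tendsto ξ (𝓝[>] (0:ℝ)) atTop := by
    rw [tendsto_atTop]
    intro X
    have hX'a : max X (a + 1) ∈ Ioi a := lt_of_lt_of_le (by linarith : a < a + 1) (le_max_right _ _)
    have hpos := hq'pos _ hX'a
    have hmem : Ioo (0:ℝ) (min t0 (q' (max X (a + 1)))) ∈ 𝓝[>] (0:ℝ) :=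
      Ioo_mem_nhdsGT_of_mem ⟨le_refl _, lt_min ht0 hpos⟩
    filter_upwards [hmem] with t ht
    have ht' : t ∈ Ioo (0:ℝ) t0 := ⟨ht.1, lt_of_lt_of_le ht.2 (min_le_left _ _)⟩
    obtain ⟨hxa, hqx⟩ := hξ t ht'
    by_contra h
    push_neg at h
    have hle : ξ t ≤ max X (a + 1) := le_trans h.le (le_max_left _ _)
    have := hq'anti hxa hX'a hle
    have ht2 : t < q' (max X (a + 1)) := lt_of_lt_of_le ht.2 (min_le_right _ _)
    rw [hqx] at this
    linarith
  -- part (a)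
  have parta : Tendsto (fun t => t * ξ t / |Real.log t|) (𝓝[>] (0:ℝ)) atTop := by
    -- monotone auxiliary g(x) = log (q' x) + c₂ log x
    set g : ℝ → ℝ := fun x => Real.log (q' x) + c₂ * Real.log x with hgdef
    have hgd : ∀ x ∈ Ioi a, HasDerivAt g (q'' x / q' x + c₂ * x⁻¹) x := by
      intro x hx
      have h1 : HasDerivAt (fun y => Real.log (q' y)) (q'' x / q' x) x :=
        (hq' x hx).log (ne_of_gt (hq'pos x hx))
      have h2 : HasDerivAt (fun y => c₂ * Real.log y) (c₂ * x⁻¹) x :=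
        (Real.hasDerivAt_log (ne_of_gt (lt_trans ha hx))).const_mul c₂
      exact h1.add h2
    have hgmono : MonotoneOn g (Ioi a) := by
      apply monotoneOn_of_deriv_nonneg (convex_Ioi a)
      · exact fun x hx => (hgd x hx).continuousAt.continuousWithinAt
      · intro x hx
        rw [interior_Ioi] at hx
        exact (hgd x hx).differentiableAt.differentiableWithinAt
      · intro x hx
        rw [interior_Ioi] at hx
        rw [(hgd x hx).deriv]
        have hx0 : (0:ℝ) < x := lt_trans ha hx
        have hq'x := hq'pos x hx
        have hb := (hb1 x hx).2
        have hb' : (-q'' x) * x ≤ c₂ * q' x := by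
          rw [← le_div_iff₀ hx0]; exact hb
        have heq : q'' x / q' x + c₂ * x⁻¹ = (q'' x * x + c₂ * q' x) / (q' x * x) := by
          field_simp
        rw [heq]
        apply div_nonneg _ (by positivity)
        nlinarith
    have hga : a + 1 ∈ Ioi a := by simp
    set M : ℝ := max 1 (-(g (a + 1))) with hMdef
    have hM1 : (1:ℝ) ≤ M := le_max_left _ _
    -- main growth statement
    have hξbig : ∀ᶠ t in 𝓝[>] (0:ℝ), max (Real.exp M) (a + 1) ≤ ξ t :=
      hξtop.eventually_ge_atTop _
    have hsmall : ∀ᶠ t in 𝓝[>] (0:ℝ), t ∈ Ioo (0:ℝ) (min t0 1) :=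
      Ioo_mem_nhdsGT_of_mem ⟨le_refl _, lt_min ht0 one_pos⟩
    have hineq : ∀ᶠ t in 𝓝[>] (0:ℝ),
        (ξ t * q' (ξ t) / Real.log (ξ t)) / (c₂ + 1) ≤ t * ξ t / |Real.log t| := by
      filter_upwards [hξbig, hsmall] with t hbig ht
      have ht' : t ∈ Ioo (0:ℝ) t0 := ⟨ht.1, lt_of_lt_of_le ht.2 (min_le_left _ _)⟩
      obtain ⟨hxa, hqx⟩ := hξ t ht'
      set x := ξ t with hxdef
      have hx1 : Real.exp M ≤ x := le_trans (le_max_left _ _) hbig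
      have hxa1 : a + 1 ≤ x := le_trans (le_max_right _ _) hbig
      have hlogx : M ≤ Real.log x := by
        rw [← Real.log_exp M]
        exact Real.log_le_log (Real.exp_pos M) hx1
      have hlogxpos : (0:ℝ) < Real.log x := lt_of_lt_of_le (by linarith) hlogx
      -- lower bound on log t
      have hlt1 : t < 1 := lt_of_lt_of_le ht.2 (min_le_right _ _)
      have hlogt : Real.log t < 0 := Real.log_neg ht.1 hlt1
      have hgle : g (a + 1) ≤ g x := hgmono hga hxa hxa1
      have hM2 : -(g (a + 1)) ≤ M := le_max_right _ _
      have hgx : g x = Real.log (q' x) + c₂ * Real.log x := rfl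
      have hlb : -(c₂ + 1) * Real.log x ≤ Real.log t := by
        rw [← hqx]
        rw [hgx] at hgle
        nlinarith
      have habsle : |Real.log t| ≤ (c₂ + 1) * Real.log x := by
        rw [abs_of_neg hlogt]; linarith
      have habspos : (0:ℝ) < |Real.log t| := abs_pos.mpr (ne_of_lt hlogt)
      have hx0 : (0:ℝ) < x := lt_trans ha hxa
      have heqL : (x * q' x / Real.log x) / (c₂ + 1) = t * x / ((c₂ + 1) * Real.log x) := by
        have hne := hlogxpos.ne'
        rw [hqx]; field_simp
      rw [heqL]
      gcongr
      exact mul_nonneg ht.1.le hx0.le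
    have h1 : Tendsto (fun t => (ξ t * q' (ξ t) / Real.log (ξ t)) / (c₂ + 1))
        (𝓝[>] (0:ℝ)) atTop := by
      have := (hgrow.comp hξtop).atTop_div_const (by linarith : (0:ℝ) < c₂ + 1)
      exact this.congr (fun t => by simp [Function.comp])
    exact tendsto_atTop_mono' _ hineq h1
  refine ⟨parta, ?_, ?_⟩
  · -- part (b)
    refine ⟨c₂⁻¹, by positivity, ?_⟩
    filter_upwards [Ioo_mem_nhdsGT_of_mem ⟨le_refl (0:ℝ), ht0⟩] with t ht
    obtain ⟨hxa, hqx⟩ := hξ t ht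
    have hx0 : (0:ℝ) < ξ t := lt_trans ha hxa
    have ht1 : (0:ℝ) < t := ht.1
    have hu : (0:ℝ) < -q'' (ξ t) := by linarith [hq''neg _ hxa]
    have hb := (hb1 _ hxa).2
    rw [hqx] at hb
    have h2 : -ξ' t = (-q'' (ξ t))⁻¹ := by
      rw [key1 t ht, ← neg_inv]
    rw [h2]
    have h3 : (c₂ * t / ξ t)⁻¹ ≤ (-q'' (ξ t))⁻¹ :=
      inv_anti₀ (by positivity) hb
    calc c₂⁻¹ * ξ t / t = (c₂ * t / ξ t)⁻¹ := by
          field_simp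
        _ ≤ (-q'' (ξ t))⁻¹ := h3
  · -- part (c)
    refine ⟨c₄ / c₁, by positivity, ?_⟩
    filter_upwards [Ioo_mem_nhdsGT_of_mem ⟨le_refl (0:ℝ), ht0⟩] with t ht
    obtain ⟨hxa, hqx⟩ := hξ t ht
    have hx0 : (0:ℝ) < ξ t := lt_trans ha hxa
    have ht1 : (0:ℝ) < t := ht.1
    have hu : (0:ℝ) < -q'' (ξ t) := by linarith [hq''neg _ hxa]
    have hξ'lt := hξ'neg t ht
    have h3 := hq'''pos _ hxa
    constructor
    · rw [key2 t ht]
      apply div_nonneg _ (by positivity)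
      nlinarith
    · -- upper bound
      have hform : ξ'' t = q''' (ξ t) / (-q'' (ξ t)) ^ 3 := by
        rw [key2 t ht, key1 t ht]
        have hne : q'' (ξ t) ≠ 0 := by linarith
        field_simp
      have hform2 : -ξ' t = (-q'' (ξ t))⁻¹ := by rw [key1 t ht, ← neg_inv]
      rw [hform, hform2]
      have hb1a := (hb1 _ hxa).1
      have hb2b := (hb2 _ hxa).2
      rw [hqx] at hb1a
      -- c₁ * t ≤ (-q'' x) * x
      have hA : c₁ * t ≤ (-q'' (ξ t)) * ξ t := (div_le_iff₀ hx0).mp hb1a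
      have hB : q''' (ξ t) * ξ t ≤ c₄ * (-q'' (ξ t)) := (le_div_iff₀ hx0).mp hb2b
      have hR : c₄ / c₁ * (-q'' (ξ t))⁻¹ / t = c₄ / (c₁ * (-q'' (ξ t)) * t) := by
        field_simp
      rw [hR, div_le_div_iff₀ (by positivity) (by positivity)]
      have h5 := mul_le_mul hB hA (by positivity) (by positivity)
      have h6 : q''' (ξ t) * (c₁ * t) ≤ c₄ * (-q'' (ξ t)) ^ 2 :=
        le_of_mul_le_mul_right (by linear_combination h5) hx0
      nlinarith [mul_le_mul_of_nonneg_right h6 hu.le]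
end

section
/- For q(x) = −log c + (log x)^β with β > 2, the inflection scale satisfies x_n* ~ √(2^{1−β} β n σ² (log n)^{β−1}) and N_n* ~ 2 x_n* as n → ∞, where x_n* solves |q''(x_n*)| = 1/(nσ²) and N_n* = x_n* + nσ² q'(x_n*). -/
open Real Set Filter

lemma aux_sub_div (a : ℝ) : Tendsto (fun t : ℝ => (t - a) / t) atTop (nhds 1) := by
  have h : Tendsto (fun t : ℝ => 1 - a / t) atTop (nhds (1 - 0)) :=
    tendsto_const_nhds.sub (tendsto_const_nhds.div_atTop tendsto_id)
  rw [sub_zero] at h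
  refine h.congr' ?_
  filter_upwards [eventually_ne_atTop (0:ℝ)] with t ht
  field_simp

lemma aux_div_sub (a : ℝ) : Tendsto (fun t : ℝ => t / (t - a)) atTop (nhds 1) := by
  have h := (aux_sub_div a).inv₀ one_ne_zero
  rw [inv_one] at h
  refine h.congr (fun t => ?_)
  rw [inv_div]

lemma aux_log_div (f : ℕ → ℝ) (hf : Tendsto f atTop atTop) :
    Tendsto (fun n => Real.log (f n) / f n) atTop (nhds 0) :=
  (Real.isLittleO_log_id_atTop.tendsto_div_nhds_zero).comp hf

/-- Lemma 2.12 (logarithmic hazard q(x) = −log c + (log x)^β, β > 2):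
x_n* ~ √(2^{1−β} β nσ² (log n)^{β−1}) and N_n* ~ 2 x_n*. -/
theorem stmt14 (β c σ2 : ℝ) (hβ : 2 < β) (hc : 0 < c) (hσ : 0 < σ2)
    (q' q'' : ℝ → ℝ)
    (hq' : ∀ x ∈ Ioi (1:ℝ),
      HasDerivAt (fun y => -Real.log c + (Real.log y) ^ β) (q' x) x)
    (hq'' : ∀ x ∈ Ioi (1:ℝ), HasDerivAt q' (q'' x) x)
    (xstar Nstar : ℕ → ℝ)
    (hx : ∀ n : ℕ, 1 ≤ n → xstar n ∈ Ioi (1:ℝ) ∧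
      q'' (xstar n) = -(1 / ((n : ℝ) * σ2)) ∧
      Nstar n = xstar n + (n : ℝ) * σ2 * q' (xstar n))
    (hxinf : Tendsto xstar atTop atTop) :
    Tendsto (fun n : ℕ =>
        xstar n /
          Real.sqrt ((2:ℝ) ^ (1 - β) * β * ((n : ℝ) * σ2) *
            (Real.log n) ^ (β - 1)))
      atTop (nhds 1) ∧
    Tendsto (fun n : ℕ => Nstar n / (2 * xstar n)) atTop (nhds 1) := by
  have hβ0 : (0:ℝ) < β := by linarith
  -- first derivative formula
  have hq'eq : ∀ x ∈ Ioi (1:ℝ), q' x = β * Real.log x ^ (β - 1) * x⁻¹ := by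
    intro x hx
    have hx1 : (1:ℝ) < x := hx
    have hx0 : x ≠ 0 := by linarith
    have hr : HasDerivAt (fun t : ℝ => t ^ β) (β * Real.log x ^ (β - 1)) (Real.log x) :=
      Real.hasDerivAt_rpow_const (Or.inr (by linarith))
    have h2 : HasDerivAt (fun y : ℝ => -Real.log c + (Real.log y) ^ β)
        (β * Real.log x ^ (β - 1) * x⁻¹) x :=
      ((hr.comp x (Real.hasDerivAt_log hx0))).const_add (-Real.log c)
    exact (hq' x hx).unique h2
  -- second derivative formula
  have hq''eq : ∀ x ∈ Ioi (1:ℝ),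
      q'' x = β * Real.log x ^ (β - 2) * ((β - 1) - Real.log x) / x ^ 2 := by
    intro x hx
    have hx1 : (1:ℝ) < x := hx
    have hx0 : x ≠ 0 := by linarith
    have hlogpos : 0 < Real.log x := Real.log_pos hx1
    have h1 : HasDerivAt (fun y : ℝ => Real.log y ^ (β - 1))
        ((β - 1) * Real.log x ^ (β - 1 - 1) * x⁻¹) x :=
      (Real.hasDerivAt_rpow_const (p := β - 1) (Or.inr (by linarith))).comp x
        (Real.hasDerivAt_log hx0)
    have h2 : HasDerivAt (fun y : ℝ => y⁻¹) (-(x ^ 2)⁻¹) x := hasDerivAt_inv hx0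
    have h3 : HasDerivAt (fun y : ℝ => β * (Real.log y ^ (β - 1) * y⁻¹))
        (β * ((β - 1) * Real.log x ^ (β - 1 - 1) * x⁻¹ * x⁻¹
          + Real.log x ^ (β - 1) * -(x ^ 2)⁻¹)) x := (h1.mul h2).const_mul β
    have heq : q' =ᶠ[nhds x] fun y : ℝ => β * (Real.log y ^ (β - 1) * y⁻¹) := by
      filter_upwards [IsOpen.mem_nhds isOpen_Ioi hx] with y hy
      rw [hq'eq y hy]; ring
    have h5 := (hq'' x hx).unique (h3.congr_of_eventuallyEq heq)
    have e1 : Real.log x ^ (β - 1) = Real.log x ^ (β - 2) * Real.log x := by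
      rw [show β - 1 = β - 2 + 1 by ring, Real.rpow_add_one (ne_of_gt hlogpos)]
    rw [h5, show β - 1 - 1 = β - 2 by ring, e1]
    field_simp
    ring
  set L : ℕ → ℝ := fun n => Real.log (xstar n) with hLdef
  -- the key equation (E)
  have hkey : ∀ n : ℕ, 1 ≤ n →
      (xstar n) ^ 2 = (n : ℝ) * σ2 * β * L n ^ (β - 2) * (L n - (β - 1)) := by
    intro n hn
    obtain ⟨hx1, hq2, -⟩ := hx n hn
    have hx1' : (1:ℝ) < xstar n := hx1
    have hx0 : xstar n ≠ 0 := by linarith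
    have hn0 : (0:ℝ) < (n : ℝ) := by exact_mod_cast hn
    have hm0 : (n : ℝ) * σ2 ≠ 0 := by positivity
    rw [hq''eq _ hx1] at hq2
    have hx2 : (xstar n) ^ 2 ≠ 0 := pow_ne_zero 2 hx0
    field_simp at hq2
    nlinarith [hq2]
  -- L tends to infinity
  have hL : Tendsto L atTop atTop := Real.tendsto_log_atTop.comp hxinf
  have hLn : Tendsto (fun n : ℕ => Real.log n) atTop atTop :=
    Real.tendsto_log_atTop.comp tendsto_natCast_atTop_atTop
  -- eventual positivity facts
  have hev : ∀ᶠ n : ℕ in atTop, 1 ≤ n ∧ β - 1 < L n ∧ 0 < Real.log n := by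
    filter_upwards [eventually_ge_atTop 1, hL.eventually_gt_atTop (β - 1),
      hLn.eventually_gt_atTop 0] with n h1 h2 h3
    exact ⟨h1, h2, h3⟩
  -- PART 2 : Nstar n / (2 xstar n) → 1
  have part2 : Tendsto (fun n : ℕ => Nstar n / (2 * xstar n)) atTop (nhds 1) := by
    have hlim : Tendsto (fun n : ℕ => 1/2 + (1/2) * (L n / (L n - (β - 1))))
        atTop (nhds (1/2 + (1/2) * 1)) :=
      tendsto_const_nhds.add (((aux_div_sub (β - 1)).comp hL).const_mul (1/2))
    norm_num at hlim
    refine hlim.congr' ?_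
    filter_upwards [hev] with n hnn
    obtain ⟨hn, hLb, -⟩ := hnn
    obtain ⟨hx1, -, hN⟩ := hx n hn
    have hx1' : (1:ℝ) < xstar n := hx1
    have hx0 : xstar n ≠ 0 := by linarith
    have hlogpos : (0:ℝ) < L n := by linarith [hβ]
    have hm0 : (0:ℝ) < (n:ℝ) * σ2 := by
      have : (0:ℝ) < (n:ℝ) := by exact_mod_cast hn
      positivity
    have hP : (0:ℝ) < L n ^ (β - 2) := Real.rpow_pos_of_pos hlogpos _
    have e1 : L n ^ (β - 1) = L n ^ (β - 2) * L n := by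
      rw [show β - 1 = β - 2 + 1 by ring, Real.rpow_add_one (ne_of_gt hlogpos)]
    have hEq := hkey n hn
    rw [hN, hq'eq _ hx1, e1]
    have hsub : L n - (β - 1) ≠ 0 := by linarith
    have e4 : (n:ℝ) * σ2 * (β * (L n ^ (β - 2) * L n) * (xstar n)⁻¹)
        = xstar n * (L n / (L n - (β - 1))) := by
      field_simp
      linear_combination (-1) * hEq
    rw [e4]
    field_simp
  refine ⟨?_, part2⟩
  -- PART 1
  -- log of key equation
  have h2L : ∀ᶠ n : ℕ in atTop, 2 * L n = Real.log n +
      (Real.log σ2 + Real.log β + (β - 2) * Real.log (L n) + Real.log (L n - (β - 1))) := by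
    filter_upwards [hev] with n hnn
    obtain ⟨hn, hLb, -⟩ := hnn
    obtain ⟨hx1, -, -⟩ := hx n hn
    have hx1' : (1:ℝ) < xstar n := hx1
    have hlogpos : (0:ℝ) < L n := by linarith [hβ]
    have hn0 : (0:ℝ) < (n:ℝ) := by exact_mod_cast hn
    have hsub : (0:ℝ) < L n - (β - 1) := by linarith
    have hP : (0:ℝ) < L n ^ (β - 2) := Real.rpow_pos_of_pos hlogpos _
    have := congrArg Real.log (hkey n hn)
    rw [Real.log_pow, Real.log_mul (by positivity) (ne_of_gt hsub),
      Real.log_mul (by positivity) (ne_of_gt hP),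
      Real.log_mul (by positivity) (ne_of_gt hβ0),
      Real.log_mul (ne_of_gt hn0) (ne_of_gt hσ),
      Real.log_rpow hlogpos] at this
    push_cast at this
    linarith [this]
  -- log n / (2 L n) → 1
  have hA : Tendsto (fun n : ℕ => (Real.log σ2 + Real.log β + (β - 2) * Real.log (L n)
      + Real.log (L n - (β - 1))) / (2 * L n)) atTop (nhds 0) := by
    have t1 : Tendsto (fun n : ℕ => (Real.log σ2 + Real.log β) / (2 * L n)) atTop (nhds 0) :=
      tendsto_const_nhds.div_atTop (hL.const_mul_atTop two_pos)
    have t2 : Tendsto (fun n : ℕ => (β - 2) * Real.log (L n) / (2 * L n)) atTop (nhds 0) := by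
      have h := ((aux_log_div L hL).const_mul ((β - 2)/2))
      rw [mul_zero] at h
      refine h.congr' ?_
      filter_upwards [hL.eventually_gt_atTop 0] with n hpos
      field_simp
    have t3 : Tendsto (fun n : ℕ => Real.log (L n - (β - 1)) / (2 * L n)) atTop (nhds 0) := by
      have hL' : Tendsto (fun n : ℕ => L n - (β - 1)) atTop atTop :=
        tendsto_atTop_add_const_right _ _ hL
      have h1 := aux_log_div _ hL'
      have h2 : Tendsto (fun n : ℕ => (L n - (β - 1)) / (2 * L n)) atTop (nhds (1/2)) := by
        have := ((aux_sub_div (β - 1)).comp hL).const_mul (1/2)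
        rw [mul_one] at this
        refine this.congr' ?_
        filter_upwards [hL.eventually_gt_atTop 0] with n hpos
        simp only [Function.comp]
        field_simp
      have := h1.mul h2
      rw [zero_mul] at this
      refine this.congr' ?_
      filter_upwards [hL.eventually_gt_atTop (β - 1), hL.eventually_gt_atTop 0]
        with n h1' h2'
      have hs : L n - (β - 1) ≠ 0 := by linarith
      field_simp
    have := (t1.add t2).add t3
    rw [add_zero, add_zero] at this
    refine this.congr (fun n => ?_)
    rw [← add_div, ← add_div]
  have hlogdiv : Tendsto (fun n : ℕ => Real.log n / (2 * L n)) atTop (nhds 1) := by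
    have h : Tendsto (fun n : ℕ => 1 - (Real.log σ2 + Real.log β + (β - 2) * Real.log (L n)
        + Real.log (L n - (β - 1))) / (2 * L n)) atTop (nhds (1 - 0)) :=
      tendsto_const_nhds.sub hA
    rw [sub_zero] at h
    refine h.congr' ?_
    filter_upwards [h2L, hL.eventually_gt_atTop 0] with n hEq hpos
    have h2L0 : 2 * L n ≠ 0 := by positivity
    field_simp
    linarith [hEq]
  have hratio : Tendsto (fun n : ℕ => 2 * L n / Real.log n) atTop (nhds 1) := by
    have h := hlogdiv.inv₀ one_ne_zero
    rw [inv_one] at h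
    refine h.congr (fun n => ?_)
    rw [inv_div]
  -- the squared ratio
  have hR : Tendsto (fun n : ℕ => (xstar n) ^ 2 /
      ((2:ℝ) ^ (1 - β) * β * ((n : ℝ) * σ2) * (Real.log n) ^ (β - 1))) atTop (nhds 1) := by
    have hfac1 : Tendsto (fun n : ℕ => (2 * L n / Real.log n) ^ (β - 1)) atTop (nhds 1) := by
      have := hratio.rpow_const (p := β - 1) (Or.inl one_ne_zero)
      rwa [Real.one_rpow] at this
    have hfac2 : Tendsto (fun n : ℕ => (L n - (β - 1)) / L n) atTop (nhds 1) :=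
      (aux_sub_div (β - 1)).comp hL
    have h := hfac1.mul hfac2
    rw [mul_one] at h
    refine h.congr' ?_
    filter_upwards [hev] with n hnn
    obtain ⟨hn, hLb, hlogn⟩ := hnn
    have hlogpos : (0:ℝ) < L n := by linarith [hβ]
    have hn0 : (0:ℝ) < (n:ℝ) := by exact_mod_cast hn
    have hsub : (0:ℝ) < L n - (β - 1) := by linarith
    have hQ : (0:ℝ) < (Real.log n) ^ (β - 1) := Real.rpow_pos_of_pos hlogn _
    have hT : (0:ℝ) < (2:ℝ) ^ (β - 1) := Real.rpow_pos_of_pos two_pos _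
    have hPL : (0:ℝ) < L n ^ (β - 1) := Real.rpow_pos_of_pos hlogpos _
    have e1 : L n ^ (β - 2) = L n ^ (β - 1) / L n := by
      rw [show β - 2 = β - 1 - 1 by ring, Real.rpow_sub hlogpos, Real.rpow_one]
    have e2 : (2:ℝ) ^ (1 - β) = ((2:ℝ) ^ (β - 1))⁻¹ := by
      rw [show (1:ℝ) - β = -(β - 1) by ring, Real.rpow_neg (by norm_num)]
    have e3 : (2 * L n / Real.log n) ^ (β - 1)
        = (2:ℝ) ^ (β - 1) * L n ^ (β - 1) / (Real.log n) ^ (β - 1) := by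
      rw [Real.div_rpow (by positivity) (le_of_lt hlogn),
        Real.mul_rpow (by norm_num) (le_of_lt hlogpos)]
    rw [e3, hkey n hn, e1, e2]
    field_simp
  -- conclude by taking square roots
  have hS := (Real.continuous_sqrt.tendsto 1).comp hR
  rw [Real.sqrt_one] at hS
  refine hS.congr' ?_
  filter_upwards [hev] with n hnn
  obtain ⟨hn, -, -⟩ := hnn
  obtain ⟨hx1, -, -⟩ := hx n hn
  have hx1' : (1:ℝ) < xstar n := hx1
  simp only [Function.comp]
  rw [Real.sqrt_div (sq_nonneg _), Real.sqrt_sq (by linarith)]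
end
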